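/- arXiv:1705.05506 — 2 statements merged into one kernel-verified Lean document; each statement's English description precedes it below -/
import Mathlib

section
/- Let μ be a probability measure on a measurable space 𝒟, and let φ_0, …, φ_K : 𝒟 → ℝ be square-integrable functions with φ_0 ≡ 1 which are pairwise orthogonal in L²(μ). Let x be the ℝⁿ-valued random vector with components x_i = ∑_{j=0}^{K} c_{ij} φ_j, let S be a diagonal positive semi-definite n × n matrix, R a symmetric m × m matrix, u ∈ ℝᵐ, and g ∈ ℝⁿ. Define the concatenated coefficient vector C = (c_{10}, …, c_{1K}, …, c_{n0}, …, c_{nK}) ∈ ℝ^{n(K+1)}, the lifted goal G = (g_1, 0, …, 0, …, g_n, 0, …, 0) ∈ ℝ^{n(K+1)} (each goal entry followed by K zeros), and the matrix 𝐒 = S ⊗ diag(⟨φ_0,φ_0⟩, ⟨φ_1,φ_1⟩, …, ⟨φ_K,φ_K⟩), where ⊗ is the Kronecker product and ⟨φ_j, φ_j⟩ = ∫ φ_j² dμ. Then E[ ½ (x − g)ᵀ S (x − g) + ½ uᵀ R u ] = ½ (C − G)ᵀ 𝐒 (C − G) + ½ uᵀ R u. -/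
open MeasureTheory Matrix Kronecker

lemma integrable_mul_of_memL2 {Ω : Type*} [MeasurableSpace Ω] {μ : Measure Ω}
    {f g : Ω → ℝ} (hf : MemLp f 2 μ) (hg : MemLp g 2 μ) :
    Integrable (fun ω => f ω * g ω) μ := by
  have h : Integrable (fun ω => ((f ω + g ω) ^ 2 - f ω ^ 2 - g ω ^ 2) * (1 / 2)) μ :=
    (((hf.add hg).integrable_sq.sub hf.integrable_sq).sub hg.integrable_sq).mul_const _
  convert h using 2 with ω
  ring

/-- Lemma 2 of the paper: an expected quadratic cost on a random state with
truncated gPC expansion `x_i = ∑_{j=0}^K c_{ij} φ_j` equals a deterministic quadratic cost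
on the gPC coefficients, with lifted weighting matrix `𝐒 = S ⊗ diag(⟨φ_j,φ_j⟩)` and lifted
goal `G` placing each goal entry at the `0`-th coefficient. -/
theorem gpc_expected_quadratic_cost {Ω : Type*} [MeasurableSpace Ω] (μ : Measure Ω)
    [IsProbabilityMeasure μ]
    (K n m : ℕ) (φ : Fin (K + 1) → Ω → ℝ)
    (hmem : ∀ j, MemLp (φ j) 2 μ)
    (hφ0 : ∀ ω, φ 0 ω = 1)
    (horth : ∀ i j, i ≠ j → ∫ ω, φ i ω * φ j ω ∂μ = 0)
    (c : Fin n → Fin (K + 1) → ℝ)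
    (S : Matrix (Fin n) (Fin n) ℝ) (hSdiag : ∀ i j, i ≠ j → S i j = 0)
    (hSpsd : S.PosSemidef)
    (R : Matrix (Fin m) (Fin m) ℝ) (hR : R.IsSymm)
    (u : Fin m → ℝ) (g : Fin n → ℝ) :
    ∫ ω, ((1 / 2) * ((fun i => (∑ j, c i j * φ j ω) - g i) ⬝ᵥ
            S.mulVec (fun i => (∑ j, c i j * φ j ω) - g i))
          + (1 / 2) * (u ⬝ᵥ R.mulVec u)) ∂μ
      = (1 / 2) * ((fun p : Fin n × Fin (K + 1) =>
            c p.1 p.2 - if p.2 = 0 then g p.1 else 0) ⬝ᵥ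
          (S ⊗ₖ Matrix.diagonal fun j => ∫ ω, (φ j ω) ^ 2 ∂μ).mulVec
            (fun p : Fin n × Fin (K + 1) =>
              c p.1 p.2 - if p.2 = 0 then g p.1 else 0))
        + (1 / 2) * (u ⬝ᵥ R.mulVec u) := by
  classical
  set d : Fin (K + 1) → ℝ := fun j => ∫ ω, (φ j ω) ^ 2 ∂μ with hd
  set a : Fin n → Fin (K + 1) → ℝ := fun i j => c i j - if j = 0 then g i else 0 with ha
  -- rewrite the deviation vector using the coefficients `a`
  have hv : ∀ (ω : Ω) (i : Fin n), (∑ j, c i j * φ j ω) - g i = ∑ j, a i j * φ j ω := by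
    intro ω i
    have h1 : ∑ j, a i j * φ j ω
        = ∑ j, (c i j * φ j ω - if j = 0 then g i * φ j ω else 0) := by
      refine Finset.sum_congr rfl fun j _ => ?_
      by_cases h : j = 0 <;> simp [ha, h] <;> ring
    rw [h1, Finset.sum_sub_distrib,
      Finset.sum_ite_eq' Finset.univ (0 : Fin (K + 1)) (fun j => g i * φ j ω)]
    simp [hφ0 ω]
  have hint : ∀ j k, Integrable (fun ω => φ j ω * φ k ω) μ := fun j k =>
    integrable_mul_of_memL2 (hmem j) (hmem k)
  have hφjk : ∀ j k, (∫ ω, φ j ω * φ k ω ∂μ) = if j = k then d j else 0 := by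
    intro j k
    by_cases h : j = k
    · subst h; simp [hd, sq]
    · simp [h, horth j k h]
  -- pointwise expansion of the quadratic form
  have hpt : ∀ ω : Ω, (1 / 2 : ℝ) * ((fun i => (∑ j, c i j * φ j ω) - g i) ⬝ᵥ
        S.mulVec (fun i => (∑ j, c i j * φ j ω) - g i))
      = ∑ i, ∑ j, ∑ k, (1 / 2 * S i i * a i j * a i k) * (φ j ω * φ k ω) := by
    intro ω
    have hmv : ∀ i, S.mulVec (fun i => (∑ j, c i j * φ j ω) - g i) i
        = S i i * (∑ j, a i j * φ j ω) := by
      intro i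
      rw [Matrix.mulVec, dotProduct]
      refine (Finset.sum_eq_single i
        (fun b _ hb => by simp [hSdiag i b (Ne.symm hb)]) (by simp)).trans ?_
      rw [hv ω i]
    simp only [dotProduct, hmv]
    simp only [hv ω]
    rw [Finset.mul_sum]
    refine Finset.sum_congr rfl fun i _ => ?_
    have hri : (1 / 2 : ℝ) * ((∑ j, a i j * φ j ω) * (S i i * ∑ k, a i k * φ k ω))
        = (1 / 2 * S i i) * ((∑ j, a i j * φ j ω) * (∑ k, a i k * φ k ω)) := by ring
    rw [hri, Finset.sum_mul_sum, Finset.mul_sum]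
    refine Finset.sum_congr rfl fun j _ => ?_
    rw [Finset.mul_sum]
    exact Finset.sum_congr rfl fun k _ => by ring
  -- compute the integral
  have hI : ∫ ω, ((1 / 2 : ℝ) * ((fun i => (∑ j, c i j * φ j ω) - g i) ⬝ᵥ
        S.mulVec (fun i => (∑ j, c i j * φ j ω) - g i))
        + (1 / 2) * (u ⬝ᵥ R.mulVec u)) ∂μ
      = (∑ i, ∑ j, (1 / 2 * S i i * a i j * a i j) * d j)
        + (1 / 2) * (u ⬝ᵥ R.mulVec u) := by
    have hrw : (fun ω => ((1 / 2 : ℝ) * ((fun i => (∑ j, c i j * φ j ω) - g i) ⬝ᵥ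
          S.mulVec (fun i => (∑ j, c i j * φ j ω) - g i))
          + (1 / 2) * (u ⬝ᵥ R.mulVec u)))
        = fun ω => (∑ i, ∑ j, ∑ k, (1 / 2 * S i i * a i j * a i k) * (φ j ω * φ k ω))
          + (1 / 2) * (u ⬝ᵥ R.mulVec u) := by
      funext ω; rw [hpt ω]
    rw [hrw, integral_add (integrable_finset_sum _ fun i _ =>
        integrable_finset_sum _ fun j _ => integrable_finset_sum _ fun k _ =>
          (hint j k).const_mul _) (integrable_const _),
      integral_finset_sum _ (fun i _ => integrable_finset_sum _ fun j _ =>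
        integrable_finset_sum _ fun k _ => (hint j k).const_mul _),
      integral_const]
    simp only [measure_univ, ENNReal.toReal_one, smul_eq_mul, one_mul, probReal_univ]
    congr 1
    refine Finset.sum_congr rfl fun i _ => ?_
    rw [integral_finset_sum _ (fun j _ => integrable_finset_sum _ fun k _ =>
      (hint j k).const_mul _)]
    refine Finset.sum_congr rfl fun j _ => ?_
    rw [integral_finset_sum _ (fun k _ => (hint j k).const_mul _)]
    have : ∑ k, ∫ ω, (1 / 2 * S i i * a i j * a i k) * (φ j ω * φ k ω) ∂μ
        = ∑ k, if j = k then (1 / 2 * S i i * a i j * a i k) * d j else 0 := by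
      refine Finset.sum_congr rfl fun k _ => ?_
      rw [integral_const_mul, hφjk j k]
      by_cases h : j = k <;> simp [h]
    rw [this, Finset.sum_ite_eq Finset.univ j (fun k => (1 / 2 * S i i * a i j * a i k) * d j)]
    simp
  rw [hI]
  -- compute the right-hand side quadratic form
  have haG : (fun p : Fin n × Fin (K + 1) => c p.1 p.2 - if p.2 = 0 then g p.1 else 0)
      = fun p => a p.1 p.2 := rfl
  rw [haG]
  congr 1
  have hmv2 : ∀ p : Fin n × Fin (K + 1),
      (S ⊗ₖ Matrix.diagonal d).mulVec (fun p : Fin n × Fin (K + 1) => a p.1 p.2) p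
      = S p.1 p.1 * d p.2 * a p.1 p.2 := by
    rintro ⟨i, j⟩
    rw [Matrix.mulVec, dotProduct, Fintype.sum_prod_type]
    have hinner : ∀ i' : Fin n,
        ∑ j', (S ⊗ₖ Matrix.diagonal d) (i, j) (i', j') * a i' j'
        = S i i' * d j * a i' j := by
      intro i'
      have : ∀ j' : Fin (K + 1), (S ⊗ₖ Matrix.diagonal d) (i, j) (i', j') * a i' j'
          = if j = j' then S i i' * d j * a i' j' else 0 := by
        intro j'
        rw [Matrix.kroneckerMap_apply, Matrix.diagonal_apply]
        by_cases h : j = j' <;> simp [h] <;> ring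
      simp only [this]
      rw [Finset.sum_ite_eq Finset.univ j (fun j' => S i i' * d j * a i' j')]
      simp
    simp only [hinner]
    refine (Finset.sum_eq_single i
      (fun b _ hb => by simp [hSdiag i b (Ne.symm hb)]) (by simp)).trans rfl
  simp only [dotProduct, hmv2, Fintype.sum_prod_type]
  rw [Finset.mul_sum]
  refine Finset.sum_congr rfl fun i _ => ?_
  rw [Finset.mul_sum]
  exact Finset.sum_congr rfl fun j _ => by ring
end

section
/- Let μ be a probability measure on 𝒟 ⊆ ℝ^d, let φ_0, …, φ_K : 𝒟 → ℝ be measurable, let L : ℝᴺ × ℝᴺ × 𝒟 → ℝ be continuously differentiable in its first two arguments, and let F : ℝᴺ × ℝᴺ × ℝᵐ × 𝒟 → ℝᴺ be measurable. Let Q, V, P̂ : [t₀, t_f] → ℝ^{N×(K+1)} be differentiable coefficient trajectories and u : [t₀,t_f] → ℝᵐ a control, and write q(Q(t),ξ)_a = ∑_l Q_{al}(t) φ_l(ξ), v(V(t),ξ)_a = ∑_l V_{al}(t) φ_l(ξ). Assume that for all t, i, j: (i) V_{ij}(t) = Q̇_{ij}(t); (ii) P̂_{ij}(t) = ∫_𝒟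 (∂L/∂v_i)(q(Q(t),ξ), v(V(t),ξ), ξ) φ_j(ξ) dμ(ξ); (iii) d P̂_{ij}/dt (t) = ∫_𝒟 (∂L/∂q_i)(q(Q(t),ξ), v(V(t),ξ), ξ) φ_j(ξ) dμ(ξ) + ∫_𝒟 F_i(q(Q(t),ξ), v(V(t),ξ), u(t), ξ) φ_j(ξ) dμ(ξ). Define L̂(Q,V) = ∫_𝒟 L(q(Q,ξ), v(V,ξ), ξ) dμ(ξ) and F̂_{ij}(Q,V,u) = ∫_𝒟 F_i(q(Q,ξ), v(V,ξ), u, ξ) φ_j(ξ) dμ(ξ). Assume further that on a neighborhood of each point (Q(t), V(t)) there are μ-integrable dominating functions justifying differentiation of L̂ under the integral sign in each coefficient entry. Then for all t, i, j: V_{ij}(t) = Q̇_{ij}(t), P̂_{ij}(t) = ∂L̂/∂V_{ij}(Q(t),V(t)), and d P̂_{ij}/dt (t) = ∂L̂/∂Q_{ij}(Q(t),V(t)) + F̂_{ij}(Q(t),V(t),u(t)); that is, the gPC coefficients satisfy Hamilton's equations in Pontryagin form with Lagrangian L̂ and non-conservative forces F̂. -/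
open MeasureTheory Metric

private lemma gpc_aux {D : Type*} [MeasurableSpace D]
    (μ : Measure D) {N K : ℕ} (φ : Fin (K + 1) → D → ℝ)
    (L : (Fin N → ℝ) → (Fin N → ℝ) → D → ℝ)
    (hL : ∀ ξ : D, ContDiff ℝ 1 (fun p : (Fin N → ℝ) × (Fin N → ℝ) => L p.1 p.2 ξ))
    (Q V : Fin N → Fin (K + 1) → ℝ) (i : Fin N) (j : Fin (K + 1))
    (U : Set ((Fin N → Fin (K + 1) → ℝ) × (Fin N → Fin (K + 1) → ℝ)))
    (hU : U ∈ nhds (Q, V)) (G : D → ℝ) (hG : Integrable G μ)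
    (hbound : ∀ p ∈ U, ∀ᵐ ξ ∂μ,
      |fderiv ℝ (fun v => L (fun b => ∑ l', p.1 b l' * φ l' ξ) v ξ)
          (fun b => ∑ l', p.2 b l' * φ l' ξ) (Pi.single i 1) * φ j ξ| ≤ G ξ)
    (hint : ∀ p ∈ U, Integrable (fun ξ => L (fun a => ∑ l', p.1 a l' * φ l' ξ)
        (fun a => ∑ l', p.2 a l' * φ l' ξ) ξ) μ) :
    HasDerivAt (fun s : ℝ => ∫ ξ, L (fun a => ∑ l, Q a l * φ l ξ)
        (fun a => ∑ l, (V a l + if a = i ∧ l = j then s else 0) * φ l ξ) ξ ∂μ)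
      (∫ ξ, fderiv ℝ (fun v => L (fun a => ∑ l, Q a l * φ l ξ) v ξ)
          (fun a => ∑ l, V a l * φ l ξ) (Pi.single i 1) * φ j ξ ∂μ) 0 := by
  classical
  -- abbreviations
  let q₀ : D → Fin N → ℝ := fun ξ a => ∑ l, Q a l * φ l ξ
  let v₀ : D → Fin N → ℝ := fun ξ a => ∑ l, V a l * φ l ξ
  let w : D → Fin N → ℝ := fun ξ => Pi.single i (φ j ξ)
  let E : Fin N → Fin (K + 1) → ℝ := fun a l => if a = i ∧ l = j then 1 else 0
  let Fl : ℝ → D → ℝ := fun s ξ => L (q₀ ξ) (v₀ ξ + s • w ξ) ξ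
  let F' : ℝ → D → ℝ := fun s ξ =>
    fderiv ℝ (fun v => L (q₀ ξ) v ξ) (v₀ ξ + s • w ξ) (Pi.single i 1) * φ j ξ
  -- the coefficient path stays in U for small s
  obtain ⟨ε, εpos, hball⟩ : ∃ ε > 0, ∀ s ∈ ball (0 : ℝ) ε, ((Q, V + s • E) : _ × _) ∈ U := by
    have hpcont : Continuous (fun s : ℝ => ((Q, V + s • E) : _ × _)) := by fun_prop
    have hmem : (fun s : ℝ => ((Q, V + s • E) : _ × _)) ⁻¹' U ∈ nhds (0 : ℝ) := by
      have h0 : ((Q, V + (0:ℝ) • E) : _ × _) = (Q, V) := by simp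
      exact hpcont.continuousAt.preimage_mem_nhds (h0 ▸ hU)
    rcases Metric.mem_nhds_iff.1 hmem with ⟨ε, εpos, hsub⟩
    exact ⟨ε, εpos, fun s hs => hsub hs⟩
  -- key algebraic identity
  have hsum : ∀ (s : ℝ) (ξ : D),
      (fun a => ∑ l, (V a l + if a = i ∧ l = j then s else 0) * φ l ξ) = v₀ ξ + s • w ξ := by
    intro s ξ
    funext a
    simp only [Pi.add_apply, Pi.smul_apply, v₀, w, add_mul, Finset.sum_add_distrib,
      smul_eq_mul, Pi.single_apply]
    congr 1
    by_cases h : a = i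
    · simp [h, ite_mul, Finset.sum_ite_eq', mul_comm]
    · simp [h]
  have hsum' : ∀ (s : ℝ) (ξ : D),
      (fun b => ∑ l', (V + s • E) b l' * φ l' ξ) = v₀ ξ + s • w ξ := by
    intro s ξ
    have : (V + s • E) = fun a l => V a l + if a = i ∧ l = j then s else 0 := by
      funext a l; simp [E, mul_ite]
    rw [this]
    exact hsum s ξ
  -- chain rule ingredients
  have hg : ∀ (ξ : D) (v : Fin N → ℝ), HasFDerivAt (fun v => L (q₀ ξ) v ξ)
      ((fderiv ℝ (fun p : (Fin N → ℝ) × (Fin N → ℝ) => L p.1 p.2 ξ) (q₀ ξ, v)).comp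
        ((0 : (Fin N → ℝ) →L[ℝ] (Fin N → ℝ)).prod (ContinuousLinearMap.id ℝ (Fin N → ℝ)))) v := by
    intro ξ v
    have h1 : HasFDerivAt (fun p : (Fin N → ℝ) × (Fin N → ℝ) => L p.1 p.2 ξ)
        (fderiv ℝ (fun p : (Fin N → ℝ) × (Fin N → ℝ) => L p.1 p.2 ξ) (q₀ ξ, v)) (q₀ ξ, v) :=
      (((hL ξ).differentiable one_ne_zero) (q₀ ξ, v)).hasFDerivAt
    have h2 : HasFDerivAt (fun v : Fin N → ℝ => ((q₀ ξ, v) : _ × _))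
        ((0 : (Fin N → ℝ) →L[ℝ] (Fin N → ℝ)).prod (ContinuousLinearMap.id ℝ (Fin N → ℝ))) v :=
      (hasFDerivAt_const (q₀ ξ) v).prodMk (hasFDerivAt_id v)
    exact h1.comp v h2
  have hw1 : ∀ ξ : D, w ξ = φ j ξ • (Pi.single i 1 : Fin N → ℝ) := by
    intro ξ; funext a; simp [w, Pi.single_apply, mul_comm]
  have hchain : ∀ (ξ : D) (s : ℝ), HasDerivAt (fun s : ℝ => Fl s ξ) (F' s ξ) s := by
    intro ξ s
    have hinner : HasDerivAt (fun s : ℝ => v₀ ξ + s • w ξ) (w ξ) s := by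
      have h := ((hasDerivAt_id s).smul_const (w ξ)).const_add (v₀ ξ)
      rwa [one_smul] at h
    have hc := (hg ξ (v₀ ξ + s • w ξ)).comp_hasDerivAt s hinner
    convert hc using 1
    have hlin := (hg ξ (v₀ ξ + s • w ξ)).fderiv
    show fderiv ℝ (fun v => L (q₀ ξ) v ξ) (v₀ ξ + s • w ξ) (Pi.single i 1) * φ j ξ = _
    rw [(hg ξ (v₀ ξ + s • w ξ)).fderiv]
    simp only [ContinuousLinearMap.comp_apply, ContinuousLinearMap.prod_apply,
      ContinuousLinearMap.zero_apply, ContinuousLinearMap.id_apply]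
    rw [hw1 ξ]
    rw [show ((0 : Fin N → ℝ), φ j ξ • (Pi.single i 1 : Fin N → ℝ))
        = φ j ξ • (((0 : Fin N → ℝ), (Pi.single i 1 : Fin N → ℝ)) : (Fin N → ℝ) × (Fin N → ℝ))
      from by rw [Prod.smul_mk, smul_zero]]
    rw [ContinuousLinearMap.map_smul, smul_eq_mul]
    ring
    all_goals rfl
  -- continuity of the derivative in the parameter
  have hF'cont : ∀ ξ : D, Continuous (fun s : ℝ => F' s ξ) := by
    intro ξ
    have heq : (fun s : ℝ => F' s ξ) = fun s : ℝ =>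
        (fderiv ℝ (fun p : (Fin N → ℝ) × (Fin N → ℝ) => L p.1 p.2 ξ)
          (q₀ ξ, v₀ ξ + s • w ξ)) ((0 : Fin N → ℝ), Pi.single i 1) * φ j ξ := by
      funext s
      show fderiv ℝ (fun v => L (q₀ ξ) v ξ) (v₀ ξ + s • w ξ) (Pi.single i 1) * φ j ξ = _
      rw [(hg ξ (v₀ ξ + s • w ξ)).fderiv]
      simp [ContinuousLinearMap.comp_apply, ContinuousLinearMap.prod_apply]
    rw [heq]
    have hc1 : Continuous fun s : ℝ => ((q₀ ξ, v₀ ξ + s • w ξ) : _ × _) := by fun_prop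
    exact ((((hL ξ).continuous_fderiv one_ne_zero).comp hc1).clm_apply continuous_const).mul
      continuous_const
  -- measurability / integrability of the integrand family
  have hFmeas0 : ∀ s ∈ ball (0 : ℝ) ε, AEStronglyMeasurable (Fl s) μ := by
    intro s hs
    have h := (hint _ (hball s hs)).aestronglyMeasurable
    have : (fun ξ => L (fun a => ∑ l', (Q, V + s • E).1 a l' * φ l' ξ)
        (fun a => ∑ l', (Q, V + s • E).2 a l' * φ l' ξ) ξ) = Fl s := by
      funext ξ
      show L _ (fun a => ∑ l', (V + s • E) a l' * φ l' ξ) ξ = _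
      rw [hsum' s ξ]
    rwa [this] at h
  have hFint0 : Integrable (Fl 0) μ := by
    have h := hint (Q, V) (mem_of_mem_nhds hU)
    have : (fun ξ => L (fun a => ∑ l', (Q, V).1 a l' * φ l' ξ)
        (fun a => ∑ l', (Q, V).2 a l' * φ l' ξ) ξ) = Fl 0 := by
      funext ξ
      show L _ _ ξ = L _ (v₀ ξ + (0:ℝ) • w ξ) ξ
      simp
      rfl
    rwa [this] at h
  -- a.e. measurability of F' 0 as a limit of difference quotients
  have hF'meas : AEStronglyMeasurable (F' 0) μ := by
    set sn : ℕ → ℝ := fun n => ε / (2 * ((n : ℝ) + 1)) with hsn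
    have hsn_pos : ∀ n, 0 < sn n := fun n => by positivity
    have hsn_lt : ∀ n, sn n < ε := by
      intro n
      rw [hsn]
      rw [div_lt_iff₀ (by positivity)]
      nlinarith [Nat.cast_nonneg (α := ℝ) n]
    have hsn_mem : ∀ n, sn n ∈ ball (0 : ℝ) ε := by
      intro n
      rw [mem_ball, dist_zero_right, Real.norm_eq_abs, abs_of_pos (hsn_pos n)]
      exact hsn_lt n
    have htend0 : Filter.Tendsto sn Filter.atTop (nhds 0) := by
      apply Filter.Tendsto.div_atTop tendsto_const_nhds
      have h1 : Filter.Tendsto (fun n : ℕ => ((n : ℝ) + 1)) Filter.atTop Filter.atTop :=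
        Filter.tendsto_atTop_add_const_right _ 1 tendsto_natCast_atTop_atTop
      exact h1.const_mul_atTop two_pos
    have htend : Filter.Tendsto sn Filter.atTop (nhdsWithin 0 {(0:ℝ)}ᶜ) :=
      tendsto_nhdsWithin_of_tendsto_nhds_of_eventually_within sn htend0
        (Filter.Eventually.of_forall fun n => (hsn_pos n).ne')
    refine aestronglyMeasurable_of_tendsto_ae Filter.atTop
      (f := fun n ξ => ((sn n) - 0)⁻¹ • (Fl (sn n) ξ - Fl 0 ξ)) ?_ ?_
    · intro n
      exact (((hFmeas0 (sn n) (hsn_mem n)).sub (hFmeas0 0 (mem_ball_self εpos))).const_smul ((sn n - 0)⁻¹ : ℝ))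
    · refine Filter.Eventually.of_forall fun ξ => ?_
      have h := (hasDerivAt_iff_tendsto_slope.1 (hchain ξ 0)).comp htend
      simpa only [Function.comp_def, slope_def_module] using h
  -- the uniform local bound
  have hbound' : ∀ s ∈ ball (0 : ℝ) ε, ∀ᵐ ξ ∂μ, |F' s ξ| ≤ G ξ := by
    intro s hs
    refine (hbound _ (hball s hs)).mono fun ξ hξ => ?_
    have : (fun b => ∑ l', (Q, V + s • E).2 b l' * φ l' ξ) = v₀ ξ + s • w ξ := hsum' s ξ
    rw [this] at hξ
    exact hξ
  have hbound_ae : ∀ᵐ ξ ∂μ, ∀ s ∈ ball (0 : ℝ) ε, ‖F' s ξ‖ ≤ G ξ := by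
    set T : Set ℝ := ball (0 : ℝ) ε ∩ Set.range ((↑) : ℚ → ℝ) with hT
    have hTc : T.Countable := Set.Countable.mono Set.inter_subset_right (Set.countable_range _)
    have h1 : ∀ᵐ ξ ∂μ, ∀ s ∈ T, |F' s ξ| ≤ G ξ :=
      (MeasureTheory.ae_ball_iff hTc).2 fun s hs => hbound' s hs.1
    refine h1.mono fun ξ hξ s hs => ?_
    rw [Real.norm_eq_abs]
    have hclosed : IsClosed {s : ℝ | |F' s ξ| ≤ G ξ} :=
      isClosed_le (hF'cont ξ).abs continuous_const
    have hsubT : T ⊆ {s : ℝ | |F' s ξ| ≤ G ξ} := fun r hr => hξ r hr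
    have h2 : ball (0 : ℝ) ε ⊆ closure T :=
      Rat.denseRange_cast.open_subset_closure_inter isOpen_ball
    have h3 : closure T ⊆ {s : ℝ | |F' s ξ| ≤ G ξ} := by
      rw [← hclosed.closure_eq]; exact closure_mono hsubT
    exact h3 (h2 hs)
  have hdiff_ae : ∀ᵐ ξ ∂μ, ∀ s ∈ ball (0 : ℝ) ε, HasDerivAt (fun s => Fl s ξ) (F' s ξ) s :=
    Filter.Eventually.of_forall fun ξ s _ => hchain ξ s
  -- differentiate under the integral sign
  have key := hasDerivAt_integral_of_dominated_loc_of_deriv_le (ball_mem_nhds (0:ℝ) εpos)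
    (Filter.eventually_of_mem (ball_mem_nhds (0:ℝ) εpos) hFmeas0)
    hFint0 hF'meas hbound_ae hG hdiff_ae
  have hfun : (fun s : ℝ => ∫ ξ, L (fun a => ∑ l, Q a l * φ l ξ)
      (fun a => ∑ l, (V a l + if a = i ∧ l = j then s else 0) * φ l ξ) ξ ∂μ)
      = fun s : ℝ => ∫ ξ, Fl s ξ ∂μ := by
    funext s; congr 1; funext ξ
    show L _ _ ξ = L _ _ ξ
    rw [hsum s ξ]
  have hval : (∫ ξ, fderiv ℝ (fun v => L (fun a => ∑ l, Q a l * φ l ξ) v ξ)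
      (fun a => ∑ l, V a l * φ l ξ) (Pi.single i 1) * φ j ξ ∂μ) = ∫ ξ, F' 0 ξ ∂μ := by
    congr 1; funext ξ
    show fderiv ℝ _ (v₀ ξ) _ * φ j ξ = fderiv ℝ _ (v₀ ξ + (0:ℝ) • w ξ) _ * φ j ξ
    simp
    exact Or.inl rfl
  rw [hfun, hval]
  exact key.2


/-- Lemma 1 of the paper: if the gPC coefficient trajectories `Q, V, P̂`
satisfy the Galerkin projections of the Pontryagin–d'Alembert equations
`v = q̇`, `p = ∂L/∂v`, `ṗ = ∂L/∂q + F`, then they satisfy Hamilton's equations in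
Pontryagin form for the gPC Lagrangian `L̂(Q,V) = ∫ L(q(Q,ξ), v(V,ξ), ξ) dμ(ξ)` and
forces `F̂_{ij}(Q,V,u) = ∫ F_i(q(Q,ξ), v(V,ξ), u, ξ) φ_j(ξ) dμ(ξ)`: namely
`V_{ij} = Q̇_{ij}`, `P̂_{ij} = ∂L̂/∂V_{ij}`, and `dP̂_{ij}/dt = ∂L̂/∂Q_{ij} + F̂_{ij}`. -/
theorem gpc_lagrangian_system {D : Type*} [MeasurableSpace D]
    (μ : Measure D) [IsProbabilityMeasure μ]
    (N K m : ℕ) (φ : Fin (K + 1) → D → ℝ) (hφmeas : ∀ l, Measurable (φ l))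
    (L : (Fin N → ℝ) → (Fin N → ℝ) → D → ℝ)
    (hL : ∀ ξ : D, ContDiff ℝ 1 (fun p : (Fin N → ℝ) × (Fin N → ℝ) => L p.1 p.2 ξ))
    (F : (Fin N → ℝ) → (Fin N → ℝ) → (Fin m → ℝ) → D → Fin N → ℝ)
    (hFmeas : Measurable
      (fun p : ((Fin N → ℝ) × (Fin N → ℝ) × (Fin m → ℝ) × D) =>
        F p.1 p.2.1 p.2.2.1 p.2.2.2))
    (t₀ tf : ℝ)
    (Q V P Pdot : ℝ → Fin N → Fin (K + 1) → ℝ) (u : ℝ → Fin m → ℝ)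
    -- (i) V_{ij} = Q̇_{ij}
    (hQV : ∀ t ∈ Set.Icc t₀ tf, ∀ (i : Fin N) (j : Fin (K + 1)),
      HasDerivAt (fun τ => Q τ i j) (V t i j) t)
    -- (ii) P̂_{ij} = Galerkin projection of ∂L/∂v_i
    (hP : ∀ t ∈ Set.Icc t₀ tf, ∀ (i : Fin N) (j : Fin (K + 1)),
      P t i j = ∫ ξ, fderiv ℝ (fun v => L (fun a => ∑ l, Q t a l * φ l ξ) v ξ)
          (fun a => ∑ l, V t a l * φ l ξ) (Pi.single i 1) * φ j ξ ∂μ)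
    -- `Pdot` is the time derivative of `P̂`
    (hPderiv : ∀ t ∈ Set.Icc t₀ tf, ∀ (i : Fin N) (j : Fin (K + 1)),
      HasDerivAt (fun τ => P τ i j) (Pdot t i j) t)
    -- (iii) dP̂_{ij}/dt = Galerkin projection of ∂L/∂q_i + F_i
    (hPdot : ∀ t ∈ Set.Icc t₀ tf, ∀ (i : Fin N) (j : Fin (K + 1)),
      Pdot t i j
        = (∫ ξ, fderiv ℝ (fun q => L q (fun a => ∑ l, V t a l * φ l ξ) ξ)
              (fun a => ∑ l, Q t a l * φ l ξ) (Pi.single i 1) * φ j ξ ∂μ)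
          + ∫ ξ, F (fun a => ∑ l, Q t a l * φ l ξ) (fun a => ∑ l, V t a l * φ l ξ)
              (u t) ξ i * φ j ξ ∂μ)
    -- dominated-derivative conditions justifying differentiation of L̂ under the integral
    (hdom : ∀ t ∈ Set.Icc t₀ tf,
      ∃ U ∈ nhds (Q t, V t), ∃ G : D → ℝ, Integrable G μ ∧
        (∀ p ∈ U, ∀ᵐ ξ ∂μ, ∀ (a : Fin N) (l : Fin (K + 1)),
          |fderiv ℝ (fun q => L q (fun b => ∑ l', Prod.snd p b l' * φ l' ξ) ξ)
              (fun b => ∑ l', Prod.fst p b l' * φ l' ξ) (Pi.single a 1) * φ l ξ| ≤ G ξ ∧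
          |fderiv ℝ (fun v => L (fun b => ∑ l', Prod.fst p b l' * φ l' ξ) v ξ)
              (fun b => ∑ l', Prod.snd p b l' * φ l' ξ) (Pi.single a 1) * φ l ξ| ≤ G ξ) ∧
        (∀ p ∈ U, Integrable (fun ξ =>
          L (fun a => ∑ l', Prod.fst p a l' * φ l' ξ)
            (fun a => ∑ l', Prod.snd p a l' * φ l' ξ) ξ) μ)) :
    -- Hamilton's equations in Pontryagin form for the gPC coefficients
    (∀ t ∈ Set.Icc t₀ tf, ∀ (i : Fin N) (j : Fin (K + 1)),
      HasDerivAt (fun τ => Q τ i j) (V t i j) t)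
    ∧
    -- P̂_{ij}(t) = ∂L̂/∂V_{ij}(Q(t), V(t))
    (∀ t ∈ Set.Icc t₀ tf, ∀ (i : Fin N) (j : Fin (K + 1)),
      HasDerivAt
        (fun s : ℝ =>
          ∫ ξ, L (fun a => ∑ l, Q t a l * φ l ξ)
              (fun a => ∑ l, (V t a l + if a = i ∧ l = j then s else 0) * φ l ξ) ξ ∂μ)
        (P t i j) 0)
    ∧
    -- dP̂_{ij}/dt (t) = ∂L̂/∂Q_{ij}(Q(t), V(t)) + F̂_{ij}(Q(t), V(t), u(t))
    (∀ t ∈ Set.Icc t₀ tf, ∀ (i : Fin N) (j : Fin (K + 1)),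
      HasDerivAt
        (fun s : ℝ =>
          ∫ ξ, L (fun a => ∑ l, (Q t a l + if a = i ∧ l = j then s else 0) * φ l ξ)
              (fun a => ∑ l, V t a l * φ l ξ) ξ ∂μ)
        (Pdot t i j
          - ∫ ξ, F (fun a => ∑ l, Q t a l * φ l ξ) (fun a => ∑ l, V t a l * φ l ξ)
              (u t) ξ i * φ j ξ ∂μ)
        0) := by
  refine ⟨hQV, ?_, ?_⟩
  · intro t ht i j
    obtain ⟨U, hU, G, hG, hbd, hint⟩ := hdom t ht
    have h := gpc_aux μ φ L hL (Q t) (V t) i j U hU G hG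
      (fun p hp => (hbd p hp).mono fun ξ hξ => (hξ i j).2) hint
    rw [hP t ht i j]
    exact h
  · intro t ht i j
    obtain ⟨U, hU, G, hG, hbd, hint⟩ := hdom t ht
    have hU' : (Prod.swap ⁻¹' U) ∈ nhds ((V t, Q t) :
        (Fin N → Fin (K + 1) → ℝ) × (Fin N → Fin (K + 1) → ℝ)) :=
      continuous_swap.continuousAt.preimage_mem_nhds hU
    have h := gpc_aux μ φ (fun q v ξ => L v q ξ)
      (fun ξ => ((hL ξ).comp (contDiff_snd.prodMk contDiff_fst)))
      (V t) (Q t) i j (Prod.swap ⁻¹' U) hU' G hG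
      (fun p hp => (hbd (p.2, p.1) hp).mono fun ξ hξ => (hξ i j).1)
      (fun p hp => hint (p.2, p.1) hp)
    have hd : Pdot t i j
        - (∫ ξ, F (fun a => ∑ l, Q t a l * φ l ξ) (fun a => ∑ l, V t a l * φ l ξ)
            (u t) ξ i * φ j ξ ∂μ)
        = ∫ ξ, fderiv ℝ (fun q => L q (fun a => ∑ l, V t a l * φ l ξ) ξ)
            (fun a => ∑ l, Q t a l * φ l ξ) (Pi.single i 1) * φ j ξ ∂μ := by
      rw [hPdot t ht i j]
      exact add_sub_cancel_right _ _
    rw [hd]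
    exact h
end
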